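/- For all integers m ≥ 2 and n ≥ 0, the following identity holds in the polynomial ring ℤ[q][t]: t^n = Σ_{k=0}^{n} h_{n−k}([1]_q, [m+1]_q, [2m+1]_q, …, [km+1]_q) · Π_{j=0}^{k−1} (t − [jm+1]_q). -/
import Mathlib


open Finset

/-- Complete homogeneous symmetric polynomial evaluated at a list of ring elements. -/
def hpoly {R : Type*} [CommSemiring R] : ℕ → List R → R
  | 0, _ => 1
  | _ + 1, [] => 0
  | j + 1, a :: l => hpoly (j + 1) l + a * hpoly j (a :: l)
  termination_by j l => (j, l.length)

/-- The q-integer `[l]_q = 1 + q + … + q^{l-1}` in `ℤ[q]`. -/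
noncomputable def qint (l : ℕ) : Polynomial ℤ := ∑ i ∈ range l, Polynomial.X ^ i

theorem hpoly_append {R : Type*} [CommRing R] (a : R) :
    ∀ (j : ℕ) (l : List R),
      hpoly (j + 1) (l ++ [a]) = hpoly (j + 1) l + a * hpoly j (l ++ [a])
  | j, [] => by simp [hpoly]
  | 0, b :: l' => by
      have ih := hpoly_append a 0 l'
      simp only [List.cons_append, hpoly] at *
      linear_combination ih
  | (j+1), b :: l' => by
      have ih1 := hpoly_append a (j+1) l'
      have ih2 := hpoly_append a j (b :: l')
      simp only [List.cons_append, hpoly] at *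
      linear_combination ih1 + b * ih2
  termination_by j l => (j, l.length)

theorem key {R : Type*} [CommRing R] (a : ℕ → R) (n : ℕ) :
    (Polynomial.X : Polynomial R) ^ n =
      ∑ k ∈ range (n + 1),
        Polynomial.C (hpoly (n - k) ((List.range (k + 1)).map a)) *
          ∏ j ∈ range k, (Polynomial.X - Polynomial.C (a j)) := by
  induction n with
  | zero => simp [hpoly]
  | succ n ih =>
    have step : ∀ k,
        (Polynomial.C (hpoly (n - k) ((List.range (k + 1)).map a)) *
            ∏ j ∈ range k, (Polynomial.X - Polynomial.C (a j))) * Polynomial.X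
          = Polynomial.C (hpoly (n - k) ((List.range (k + 1)).map a)) *
              ∏ j ∈ range (k + 1), (Polynomial.X - Polynomial.C (a j))
            + Polynomial.C (a k * hpoly (n - k) ((List.range (k + 1)).map a)) *
              ∏ j ∈ range k, (Polynomial.X - Polynomial.C (a j)) := by
      intro k; rw [prod_range_succ, map_mul]; ring
    rw [pow_succ, ih, Finset.sum_mul,
      Finset.sum_congr rfl (fun k _ => step k), Finset.sum_add_distrib]
    rw [Finset.sum_range_succ
        (fun k => Polynomial.C (hpoly (n + 1 - k) ((List.range (k + 1)).map a)) *
          ∏ j ∈ range k, (Polynomial.X - Polynomial.C (a j))) (n + 1),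
      Finset.sum_range_succ'
        (fun k => Polynomial.C (hpoly (n + 1 - k) ((List.range (k + 1)).map a)) *
          ∏ j ∈ range k, (Polynomial.X - Polynomial.C (a j))) n,
      Finset.sum_range_succ
        (fun k => Polynomial.C (hpoly (n - k) ((List.range (k + 1)).map a)) *
          ∏ j ∈ range (k + 1), (Polynomial.X - Polynomial.C (a j))) n,
      Finset.sum_range_succ'
        (fun k => Polynomial.C (a k * hpoly (n - k) ((List.range (k + 1)).map a)) *
          ∏ j ∈ range k, (Polynomial.X - Polynomial.C (a j))) n]
    have hmain : ∀ k ∈ range n,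
        Polynomial.C (hpoly (n + 1 - (k + 1)) ((List.range (k + 1 + 1)).map a)) *
            ∏ j ∈ range (k + 1), (Polynomial.X - Polynomial.C (a j))
        = Polynomial.C (hpoly (n - k) ((List.range (k + 1)).map a)) *
              ∏ j ∈ range (k + 1), (Polynomial.X - Polynomial.C (a j))
          + Polynomial.C (a (k + 1) * hpoly (n - (k + 1)) ((List.range (k + 1 + 1)).map a)) *
              ∏ j ∈ range (k + 1), (Polynomial.X - Polynomial.C (a j)) := by
      intro k hk
      rw [mem_range] at hk
      have h1 : n + 1 - (k + 1) = n - k := by omega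
      have h2 : n - k = (n - (k + 1)) + 1 := by omega
      have h3 : (List.range (k + 1 + 1)).map a = (List.range (k + 1)).map a ++ [a (k + 1)] := by
        rw [List.range_succ, List.map_append]; rfl
      rw [h1, h2, h3, hpoly_append, map_add, map_mul]
      ring
    rw [Finset.sum_congr rfl hmain, Finset.sum_add_distrib]
    have hf0 : hpoly (n + 1 - 0) ((List.range (0 + 1)).map a)
        = a 0 * hpoly (n - 0) ((List.range (0 + 1)).map a) := by
      rw [show (List.range (0 + 1)).map a = [a 0] from rfl]
      rw [Nat.sub_zero, Nat.sub_zero, hpoly]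
      simp [hpoly]
    have hfn : (n + 1 - (n + 1)) = 0 ∧ (n - n) = 0 := by omega
    rw [hf0, hfn.1, hfn.2]
    simp only [hpoly]
    ring

/-- for `m ≥ 2` and `n ≥ 0`, in `ℤ[q][t]` (with `t` the outer variable),
`t^n = Σ_{k=0}^{n} h_{n−k}([1]_q, [m+1]_q, …, [km+1]_q) · Π_{j=0}^{k−1} (t − [jm+1]_q)`. -/
theorem stmt11 (m n : ℕ) (hm : 2 ≤ m) :
    (Polynomial.X : Polynomial (Polynomial ℤ)) ^ n =
      ∑ k ∈ range (n + 1),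
        Polynomial.C (hpoly (n - k) ((List.range (k + 1)).map fun j => qint (j * m + 1))) *
          ∏ j ∈ range k, (Polynomial.X - Polynomial.C (qint (j * m + 1))) := by
  exact key (fun j => qint (j * m + 1)) n
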